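/- arXiv:1410.0950 — 3 statements merged into one kernel-verified Lean document; each statement's English description precedes it below -/
import Mathlib

section
/- Let f_i : ℝ → ℝ satisfy f_i(u) > 0 for all u ≥ 0 and all i = 1,…,n, let U > 0, and let λ > Σ_{i=1}^n f_i(0) / U. If for each i, u_i(λ) attains the infimum of f_i(u) + λu over u ≥ 0, then Σ_{i=1}^n u_i(λ) < U. -/
/-- If `f i u > 0` for all `u ≥ 0` and all `i`, `U > 0`,
`λ > ∑ i, f i 0 / U`, and each `u i` minimizes `f i u + λ u` over `u ≥ 0`,
then `∑ i, u i < U`. -/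
theorem stmt4 (n : ℕ) (f : Fin n → ℝ → ℝ)
    (hf : ∀ i, ∀ u : ℝ, 0 ≤ u → 0 < f i u)
    (U : ℝ) (hU : 0 < U)
    (lam : ℝ) (hlam : (∑ i, f i 0) / U < lam)
    (u : Fin n → ℝ) (hu : ∀ i, 0 ≤ u i)
    (hmin : ∀ i, ∀ v : ℝ, 0 ≤ v → f i (u i) + lam * u i ≤ f i v + lam * v) :
    ∑ i, u i < U := by
  have hsum0 : 0 ≤ ∑ i, f i 0 := Finset.sum_nonneg fun i _ => (hf i 0 le_rfl).le
  have hlam0 : 0 < lam := lt_of_le_of_lt (by positivity) hlam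
  rcases Nat.eq_zero_or_pos n with h0 | hn
  · subst h0; simpa using hU
  · have key : ∀ i ∈ Finset.univ, lam * u i < f i 0 := fun i _ => by
      have := hmin i 0 le_rfl
      nlinarith [hf i (u i) (hu i)]
    have h1 : ∑ i, lam * u i < ∑ i, f i 0 :=
      Finset.sum_lt_sum_of_nonempty (Finset.univ_nonempty_iff.2 ⟨⟨0, hn⟩⟩) key
    rw [← Finset.mul_sum] at h1
    have h2 : ∑ i, f i 0 < lam * U := (div_lt_iff₀ hU).mp hlam
    have := h1.trans h2
    exact (mul_lt_mul_iff_right₀ hlam0).mp this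
end

section
/- Let p ∈ (0,1), c > 0, μ ∈ ℝ, and 0 < Σ₀ < Σ₁, and set f₀(y) = φ(y; 0, Σ₀), f₁(y) = φ(y; μ, Σ₁). If D = μ² + (Σ₁ − Σ₀)(log(Σ₁/Σ₀) + 2 log((1−p)/(cp))) < 0, then (1−p)f₀(y) < cp f₁(y) for every y ∈ ℝ, and consequently ∫_ℝ min{(1−p)f₀(y), cp f₁(y)} dy = 1 − p. -/
open MeasureTheory

/-- The Gaussian probability density function with mean `m` and variance `v`. -/
noncomputable def gaussPDF (m v y : ℝ) : ℝ :=
  (Real.sqrt (2 * Real.pi * v))⁻¹ * Real.exp (-(y - m) ^ 2 / (2 * v))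

lemma gaussPDF_as_exp (m v y : ℝ) (hv : 0 < v) :
    gaussPDF m v y =
      Real.exp (-(Real.log (2 * Real.pi) + Real.log v) / 2 + -(y - m) ^ 2 / (2 * v)) := by
  have h2pi : (0 : ℝ) < 2 * Real.pi := by positivity
  have hvpos : (0 : ℝ) < 2 * Real.pi * v := by positivity
  have hinv : (Real.sqrt (2 * Real.pi * v))⁻¹
      = Real.exp (-(Real.log (2 * Real.pi) + Real.log v) / 2) := by
    rw [Real.sqrt_eq_rpow, Real.rpow_def_of_pos hvpos, ← Real.exp_neg,
      Real.log_mul (ne_of_gt h2pi) (ne_of_gt hv)]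
    ring_nf
  rw [gaussPDF, hinv, ← Real.exp_add]

/-- If the discriminant
`D = μ² + (Σ₁ − Σ₀)(log(Σ₁/Σ₀) + 2 log((1−p)/(cp)))` is negative, then
`(1−p)f₀(y) < c·p·f₁(y)` for every `y`, and the optimal Bayes risk
`∫ min{(1−p)f₀, c·p·f₁}` equals `1 − p`. -/
theorem stmt13 (p c μ S₀ S₁ : ℝ) (hp : p ∈ Set.Ioo (0 : ℝ) 1) (hc : 0 < c)
    (hS₀ : 0 < S₀) (hS : S₀ < S₁)
    (D : ℝ)
    (hD : D = μ ^ 2 + (S₁ - S₀) * (Real.log (S₁ / S₀) + 2 * Real.log ((1 - p) / (c * p))))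
    (hDneg : D < 0) :
    (∀ y : ℝ, (1 - p) * gaussPDF 0 S₀ y < c * p * gaussPDF μ S₁ y) ∧
      (∫ y : ℝ, min ((1 - p) * gaussPDF 0 S₀ y) (c * p * gaussPDF μ S₁ y)) = 1 - p := by
  obtain ⟨hp0, hp1⟩ := hp
  have h1p : (0 : ℝ) < 1 - p := by linarith
  have hcp : (0 : ℝ) < c * p := by positivity
  have hS₁ : (0 : ℝ) < S₁ := lt_trans hS₀ hS
  have hSd : (0 : ℝ) < S₁ - S₀ := by linarith
  -- rewrite D with log differences
  have hlogdiv : Real.log (S₁ / S₀) = Real.log S₁ - Real.log S₀ :=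
    Real.log_div (ne_of_gt hS₁) (ne_of_gt hS₀)
  have hlogdiv2 : Real.log ((1 - p) / (c * p)) = Real.log (1 - p) - Real.log (c * p) :=
    Real.log_div (ne_of_gt h1p) (ne_of_gt hcp)
  have hmain : ∀ y : ℝ, (1 - p) * gaussPDF 0 S₀ y < c * p * gaussPDF μ S₁ y := by
    intro y
    have hL : (1 - p) * gaussPDF 0 S₀ y =
        Real.exp (Real.log (1 - p) +
          (-(Real.log (2 * Real.pi) + Real.log S₀) / 2 + -(y - 0) ^ 2 / (2 * S₀))) := by
      rw [Real.exp_add, Real.exp_log h1p, gaussPDF_as_exp 0 S₀ y hS₀]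
    have hR : c * p * gaussPDF μ S₁ y =
        Real.exp (Real.log (c * p) +
          (-(Real.log (2 * Real.pi) + Real.log S₁) / 2 + -(y - μ) ^ 2 / (2 * S₁))) := by
      rw [Real.exp_add, Real.exp_log hcp, gaussPDF_as_exp μ S₁ y hS₁]
    rw [hL, hR, Real.exp_lt_exp]
    -- complete the square identity
    have hiden :
        (Real.log (c * p) + (-(Real.log (2 * Real.pi) + Real.log S₁) / 2 + -(y - μ) ^ 2 / (2 * S₁)))
        - (Real.log (1 - p) + (-(Real.log (2 * Real.pi) + Real.log S₀) / 2 + -(y - 0) ^ 2 / (2 * S₀)))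
        = (S₁ - S₀) / (2 * S₀ * S₁) * (y - μ * S₀ / (S₀ - S₁)) ^ 2 - D / (2 * (S₁ - S₀)) := by
      rw [hD, hlogdiv, hlogdiv2]
      have h01 : S₀ - S₁ ≠ 0 := by linarith
      field_simp [h01]
      ring
    have hsq : 0 ≤ (S₁ - S₀) / (2 * S₀ * S₁) * (y - μ * S₀ / (S₀ - S₁)) ^ 2 := by positivity
    have hDdiv : 0 < -(D / (2 * (S₁ - S₀))) := by
      rw [neg_pos]
      exact div_neg_of_neg_of_pos hDneg (by linarith)
    nlinarith [hiden]
  refine ⟨hmain, ?_⟩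
  have hmin : (fun y : ℝ => min ((1 - p) * gaussPDF 0 S₀ y) (c * p * gaussPDF μ S₁ y))
      = fun y : ℝ => (1 - p) * gaussPDF 0 S₀ y := by
    funext y; exact min_eq_left (hmain y).le
  rw [show (∫ y : ℝ, min ((1 - p) * gaussPDF 0 S₀ y) (c * p * gaussPDF μ S₁ y))
      = ∫ y : ℝ, (1 - p) * gaussPDF 0 S₀ y from by rw [hmin]]
  rw [integral_const_mul]
  have hpdf : (fun y : ℝ => gaussPDF 0 S₀ y)
      = ProbabilityTheory.gaussianPDFReal 0 S₀.toNNReal := by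
    funext y
    simp only [gaussPDF, ProbabilityTheory.gaussianPDFReal, Real.coe_toNNReal _ hS₀.le]
  have h1 : ∫ y : ℝ, gaussPDF 0 S₀ y = 1 := by
    rw [hpdf]
    exact ProbabilityTheory.integral_gaussianPDFReal_eq_one 0
      (by simp [Real.toNNReal_eq_zero]; linarith)
  rw [h1, mul_one]
end

section
/- Let p ∈ (0,1), c > 0, μ ∈ ℝ, and 0 < Σ₀ < Σ₁, let D = μ² + (Σ₁ − Σ₀)(log(Σ₁/Σ₀) + 2 log((1−p)/(cp))) ≥ 0, and let y₋ = (−Σ₀μ − √(Σ₀Σ₁D))/(Σ₁ − Σ₀), y₊ = (−Σ₀μ + √(Σ₀Σ₁D))/(Σ₁ − Σ₀). Then the Type I error probability of the test that decides H = 0 on [y₋, y₊] satisfies ∫_{ℝ \ [y₋, y₊]} φ(y; 0, Σ₀) dy = Φ((√Σ₀ μ − √(Σ₁D))/(Σ₁ − Σ₀)) + Φ((−√Σ₀ μ − √(Σ₁D))/(Σ₁ − Σ₀)). -/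
open MeasureTheory Set

/-- The standard Gaussian cumulative distribution function. -/
noncomputable def stdGaussCDF (z : ℝ) : ℝ := ∫ t in Set.Iic z, gaussPDF 0 1 t

lemma gaussPDF_even (v y : ℝ) : gaussPDF 0 v (-y) = gaussPDF 0 v y := by
  simp [gaussPDF, neg_sq]

lemma gaussPDF_scale (v : ℝ) (hv : 0 < v) (y : ℝ) :
    gaussPDF 0 v y = (Real.sqrt v)⁻¹ • gaussPDF 0 1 ((Real.sqrt v)⁻¹ * y) := by
  have hs : 0 < Real.sqrt v := Real.sqrt_pos.2 hv
  have h2 : Real.sqrt (2 * Real.pi * v) = Real.sqrt (2 * Real.pi * 1) * Real.sqrt v := by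
    rw [← Real.sqrt_mul (by positivity)]; ring_nf
  simp only [gaussPDF, smul_eq_mul, sub_zero, h2, mul_inv]
  rw [mul_pow, ← Real.sq_sqrt hv.le]
  field_simp
  ring_nf
  rw [Real.sqrt_sq hs.le]

lemma integrable_gaussPDF (v : ℝ) (hv : 0 < v) : Integrable (gaussPDF 0 v) := by
  have : Integrable (fun y : ℝ => Real.exp (-(1/(2*v)) * y ^ 2)) :=
    integrable_exp_neg_mul_sq (by positivity)
  have h := this.const_mul (Real.sqrt (2 * Real.pi * v))⁻¹
  refine h.congr (Filter.Eventually.of_forall fun y => ?_)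
  simp only [gaussPDF, sub_zero]
  ring_nf

lemma gauss_Ioi (v a : ℝ) (hv : 0 < v) :
    (∫ y in Ioi a, gaussPDF 0 v y) = stdGaussCDF (-(a / Real.sqrt v)) := by
  have hs : 0 < Real.sqrt v := Real.sqrt_pos.2 hv
  calc (∫ y in Ioi a, gaussPDF 0 v y)
      = ∫ y in Ioi a, (Real.sqrt v)⁻¹ • gaussPDF 0 1 ((Real.sqrt v)⁻¹ * y) := by
        simp_rw [← gaussPDF_scale v hv]
    _ = (Real.sqrt v)⁻¹ • ∫ y in Ioi a, gaussPDF 0 1 ((Real.sqrt v)⁻¹ * y) := by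
        rw [integral_smul]
    _ = (Real.sqrt v)⁻¹ • (((Real.sqrt v)⁻¹)⁻¹ • ∫ y in Ioi ((Real.sqrt v)⁻¹ * a), gaussPDF 0 1 y) := by
        rw [integral_comp_mul_left_Ioi (gaussPDF 0 1) a (inv_pos.2 hs)]
    _ = ∫ y in Ioi (a / Real.sqrt v), gaussPDF 0 1 y := by
        rw [smul_smul, inv_inv, inv_mul_cancel₀ hs.ne', one_smul, inv_mul_eq_div]
    _ = ∫ y in Ioi (a / Real.sqrt v), gaussPDF 0 1 (-y) := by
        simp_rw [gaussPDF_even]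
    _ = stdGaussCDF (-(a / Real.sqrt v)) := by
        rw [integral_comp_neg_Ioi]; rfl

lemma gauss_Iic (v a : ℝ) (hv : 0 < v) :
    (∫ y in Iic a, gaussPDF 0 v y) = stdGaussCDF (a / Real.sqrt v) := by
  calc (∫ y in Iic a, gaussPDF 0 v y)
      = ∫ y in Iic a, gaussPDF 0 v (-y) := by simp_rw [gaussPDF_even]
    _ = ∫ y in Ioi (-a), gaussPDF 0 v y := integral_comp_neg_Iic a _
    _ = stdGaussCDF (a / Real.sqrt v) := by rw [gauss_Ioi v _ hv, neg_div, neg_neg]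

/-- Type I error probability of the test deciding `H = 0` on `[y₋, y₊]`:
`∫_{ℝ ∖ [y₋, y₊]} φ(y; 0, Σ₀) dy
  = Φ((√Σ₀ μ − √(Σ₁D))/(Σ₁ − Σ₀)) + Φ((−√Σ₀ μ − √(Σ₁D))/(Σ₁ − Σ₀))`. -/
theorem stmt14 (p c μ S₀ S₁ : ℝ) (hp : p ∈ Set.Ioo (0 : ℝ) 1) (hc : 0 < c)
    (hS₀ : 0 < S₀) (hS : S₀ < S₁)
    (D : ℝ)
    (hD : D = μ ^ 2 + (S₁ - S₀) * (Real.log (S₁ / S₀) + 2 * Real.log ((1 - p) / (c * p))))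
    (hDpos : 0 ≤ D)
    (ym yp : ℝ)
    (hym : ym = (-S₀ * μ - Real.sqrt (S₀ * S₁ * D)) / (S₁ - S₀))
    (hyp : yp = (-S₀ * μ + Real.sqrt (S₀ * S₁ * D)) / (S₁ - S₀)) :
    (∫ y in (Set.Icc ym yp)ᶜ, gaussPDF 0 S₀ y) =
      stdGaussCDF ((Real.sqrt S₀ * μ - Real.sqrt (S₁ * D)) / (S₁ - S₀)) +
        stdGaussCDF ((-(Real.sqrt S₀) * μ - Real.sqrt (S₁ * D)) / (S₁ - S₀)) := by
  have hSd : (0:ℝ) < S₁ - S₀ := by linarith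
  have hle : ym ≤ yp := by
    rw [hym, hyp]
    gcongr
    linarith [Real.sqrt_nonneg (S₀ * S₁ * D)]
  have hsplit : (Set.Icc ym yp)ᶜ = Iio ym ∪ Ioi yp := by
    ext x
    simp only [Set.mem_compl_iff, Set.mem_Icc, not_and_or, not_le, Set.mem_union, Set.mem_Iio,
      Set.mem_Ioi]
  have hint : Integrable (gaussPDF 0 S₀) := integrable_gaussPDF S₀ hS₀
  have hdisj : Disjoint (Iio ym) (Ioi yp) :=
    (Set.Iio_disjoint_Ici hle).mono_right Set.Ioi_subset_Ici_self
  rw [hsplit, setIntegral_union hdisj measurableSet_Ioi hint.integrableOn hint.integrableOn,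
    ← integral_Iic_eq_integral_Iio, gauss_Iic S₀ ym hS₀, gauss_Ioi S₀ yp hS₀]
  have hs : 0 < Real.sqrt S₀ := Real.sqrt_pos.2 hS₀
  have hS0 : S₀ = Real.sqrt S₀ * Real.sqrt S₀ := (Real.mul_self_sqrt hS₀.le).symm
  have hsq : Real.sqrt (S₀ * S₁ * D) = Real.sqrt S₀ * Real.sqrt (S₁ * D) := by
    rw [mul_assoc, Real.sqrt_mul hS₀.le]
  have h1 : ym / Real.sqrt S₀ = (-(Real.sqrt S₀) * μ - Real.sqrt (S₁ * D)) / (S₁ - S₀) := by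
    rw [hym, hsq, div_div]
    rw [div_eq_div_iff (by positivity) hSd.ne']
    linear_combination (-(S₁ - S₀) * μ) * hS0
  have h2 : -(yp / Real.sqrt S₀) = (Real.sqrt S₀ * μ - Real.sqrt (S₁ * D)) / (S₁ - S₀) := by
    rw [hyp, hsq, div_div, ← neg_div]
    rw [div_eq_div_iff (by positivity) hSd.ne']
    linear_combination ((S₁ - S₀) * μ) * hS0
  rw [h1, h2, add_comm]
end
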